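/- Let Φ : M_d(ℂ) → M_d(ℂ) be a quantum channel with d ≥ 2 and define f : [0,2] → [0,2] by f(δ) = sup{‖Φ(ρ₀) − Φ(ρ₁)‖₁ : ρ₀, ρ₁ density matrices on ℂ^d with ‖ρ₀ − ρ₁‖₁ = δ}. Then f is monotonically nondecreasing: f(δ) ≤ f(δ′) whenever 0 ≤ δ ≤ δ′ ≤ 2. -/

import Mathlib

open scoped ComplexOrder

/-- The trace norm `‖A‖₁ = tr √(A†A)` of a complex matrix. -/
noncomputable def traceNorm {d : ℕ} (A : Matrix (Fin d) (Fin d) ℂ) : ℝ :=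
  ((Matrix.posSemidef_conjTranspose_mul_self A).1.eigenvectorUnitary.1 *
      Matrix.diagonal (((↑) : ℝ → ℂ) ∘ (Real.sqrt ·) ∘ (Matrix.posSemidef_conjTranspose_mul_self A).1.eigenvalues) *
      (star (Matrix.posSemidef_conjTranspose_mul_self A).1.eigenvectorUnitary : Matrix (Fin d) (Fin d) ℂ)).trace.re

/-- A density matrix: positive semidefinite with unit trace. -/
def IsDensity {d : ℕ} (ρ : Matrix (Fin d) (Fin d) ℂ) : Prop :=
  ρ.PosSemidef ∧ ρ.trace = 1

/-- The map `Φ ⊗ id_n` acting on `M_d(ℂ) ⊗ M_n(ℂ)`. -/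
def stackMap {d : ℕ} (Φ : Matrix (Fin d) (Fin d) ℂ →ₗ[ℂ] Matrix (Fin d) (Fin d) ℂ) (n : ℕ)
    (M : Matrix (Fin d × Fin n) (Fin d × Fin n) ℂ) : Matrix (Fin d × Fin n) (Fin d × Fin n) ℂ :=
  Matrix.of fun ia jb => Φ (Matrix.of fun i j => M (i, ia.2) (j, jb.2)) ia.1 jb.1

/-- A quantum channel: a completely positive trace-preserving linear map. -/
def IsCPTP {d : ℕ} (Φ : Matrix (Fin d) (Fin d) ℂ →ₗ[ℂ] Matrix (Fin d) (Fin d) ℂ) : Prop :=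
  (∀ A, (Φ A).trace = A.trace) ∧
    ∀ (n : ℕ) (M : Matrix (Fin d × Fin n) (Fin d × Fin n) ℂ),
      M.PosSemidef → (stackMap Φ n M).PosSemidef

/-- The Dobrushin coefficient `η(Φ)`. -/
noncomputable def dobrushinCoeff {d : ℕ}
    (Φ : Matrix (Fin d) (Fin d) ℂ →ₗ[ℂ] Matrix (Fin d) (Fin d) ℂ) : ℝ :=
  sSup {r | ∃ ρ₀ ρ₁ : Matrix (Fin d) (Fin d) ℂ, IsDensity ρ₀ ∧ IsDensity ρ₁ ∧ ρ₀ ≠ ρ₁ ∧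
    r = traceNorm (Φ ρ₀ - Φ ρ₁) / traceNorm (ρ₀ - ρ₁)}

open Matrix

namespace Matrix.PosSemidef

/-- Square root of a PSD matrix via its spectral decomposition. -/
noncomputable def sqrt {n : Type*} [Fintype n] [DecidableEq n] {A : Matrix n n ℂ}
    (hA : A.PosSemidef) : Matrix n n ℂ :=
  hA.1.eigenvectorUnitary.1 *
    Matrix.diagonal (((↑) : ℝ → ℂ) ∘ (Real.sqrt ·) ∘ hA.1.eigenvalues) *
    (star hA.1.eigenvectorUnitary : Matrix n n ℂ)

open scoped MatrixOrder in
lemma sqrt_eq_cfcSqrt {n : Type*} [Fintype n] [DecidableEq n] {A : Matrix n n ℂ}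
    (hA : A.PosSemidef) : hA.sqrt = CFC.sqrt A := by
  rw [CFC.sqrt_eq_cfc, cfc_nnreal_eq_real _ A hA.nonneg, hA.1.cfc_eq, IsHermitian.cfc,
    Unitary.conjStarAlgAut_apply]
  unfold sqrt
  congr 3
  funext i
  simp only [Function.comp_apply]
  unfold Real.sqrt
  rfl

open scoped MatrixOrder in
lemma posSemidef_sqrt {n : Type*} [Fintype n] [DecidableEq n] {A : Matrix n n ℂ}
    (hA : A.PosSemidef) : hA.sqrt.PosSemidef := by
  rw [sqrt_eq_cfcSqrt]
  exact (CFC.sqrt_nonneg A).posSemidef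

open scoped MatrixOrder in
lemma sqrt_mul_self {n : Type*} [Fintype n] [DecidableEq n] {A : Matrix n n ℂ}
    (hA : A.PosSemidef) : hA.sqrt * hA.sqrt = A := by
  rw [sqrt_eq_cfcSqrt]
  exact CFC.sqrt_mul_sqrt_self A hA.nonneg

open scoped MatrixOrder in
lemma eq_sqrt_of_sq_eq {n : Type*} [Fintype n] [DecidableEq n] {A B : Matrix n n ℂ}
    (hB : B.PosSemidef) (hA : A.PosSemidef) (h : B ^ 2 = A) : B = hA.sqrt := by
  rw [sqrt_eq_cfcSqrt]
  exact (CFC.sqrt_unique (by rw [← sq]; exact h) hB.nonneg).symm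

end Matrix.PosSemidef

lemma traceNorm_eq_sqrt {d : ℕ} (A : Matrix (Fin d) (Fin d) ℂ) :
    traceNorm A = (Matrix.posSemidef_conjTranspose_mul_self A).sqrt.trace.re := rfl

namespace QAux

variable {d : ℕ}

lemma diag_entry_nonneg {n : Type*} [Fintype n] [DecidableEq n] {M : Matrix n n ℂ}
    (hM : M.PosSemidef) (i : n) : 0 ≤ M i i := by
  exact hM.diag_nonneg

lemma trace_nonneg {n : Type*} [Fintype n] [DecidableEq n] {M : Matrix n n ℂ}
    (hM : M.PosSemidef) : 0 ≤ M.trace :=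
  Finset.sum_nonneg fun i _ => diag_entry_nonneg hM i

lemma psd_smul {A : Matrix (Fin d) (Fin d) ℂ} (hA : A.PosSemidef) {c : ℝ} (hc : 0 ≤ c) :
    ((c : ℂ) • A).PosSemidef := by
  constructor
  · unfold Matrix.IsHermitian
    rw [conjTranspose_smul, hA.1.eq]
    simp [Complex.conj_ofReal]
  · intro x
    exact (hA.smul (Complex.zero_le_real.2 hc)).2 x

lemma psd_add {A B : Matrix (Fin d) (Fin d) ℂ} (hA : A.PosSemidef) (hB : B.PosSemidef) :
    (A + B).PosSemidef := hA.add hB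

end QAux

namespace QAux2
open QAux

variable {d : ℕ}

lemma traceNorm_nonneg (A : Matrix (Fin d) (Fin d) ℂ) : 0 ≤ traceNorm A := by
  have h := trace_nonneg (Matrix.posSemidef_conjTranspose_mul_self A).posSemidef_sqrt
  exact (Complex.le_def.1 h).1

lemma traceNorm_eq_of_decomp {A P N : Matrix (Fin d) (Fin d) ℂ}
    (hP : P.PosSemidef) (hN : N.PosSemidef) (hA : A = P - N)
    (hPN : P * N = 0) (hNP : N * P = 0) :
    traceNorm A = P.trace.re + N.trace.re := by
  have hAh : Aᴴ = A := by
    rw [hA, conjTranspose_sub, hP.1.eq, hN.1.eq]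
  have hsq : (P + N) ^ 2 = Aᴴ * A := by
    rw [hAh, hA, pow_two, add_mul, mul_add, mul_add, sub_mul, mul_sub, mul_sub, hPN, hNP]
    noncomm_ring
  have hkey : P + N = (Matrix.posSemidef_conjTranspose_mul_self A).sqrt :=
    (hP.add hN).eq_sqrt_of_sq_eq _ hsq
  rw [traceNorm_eq_sqrt]
  rw [← hkey, trace_add, Complex.add_re]

lemma traceNorm_smul {A : Matrix (Fin d) (Fin d) ℂ} {c : ℝ} (hc : 0 ≤ c) :
    traceNorm ((c : ℂ) • A) = c * traceNorm A := by
  set S := (Matrix.posSemidef_conjTranspose_mul_self A).sqrt with hS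
  have hSpsd := (Matrix.posSemidef_conjTranspose_mul_self A).posSemidef_sqrt
  have hsq : ((c : ℂ) • S) ^ 2 = ((c : ℂ) • A)ᴴ * ((c : ℂ) • A) := by
    rw [conjTranspose_smul, smul_mul_smul_comm, pow_two, smul_mul_smul_comm,
      (Matrix.posSemidef_conjTranspose_mul_self A).sqrt_mul_self]
    congr 1
    simp [Complex.conj_ofReal]
  have hkey : (c : ℂ) • S = (Matrix.posSemidef_conjTranspose_mul_self ((c : ℂ) • A)).sqrt :=
    (psd_smul hSpsd hc).eq_sqrt_of_sq_eq _ hsq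
  rw [traceNorm_eq_sqrt]
  rw [← hkey, trace_smul, smul_eq_mul, Complex.mul_re, Complex.ofReal_re, Complex.ofReal_im]
  rw [zero_mul, sub_zero]
  rfl

lemma traceNorm_diagonal_real (w : Fin d → ℝ) :
    traceNorm (Matrix.diagonal fun i => (w i : ℂ)) = ∑ i, |w i| := by
  have habs : (Matrix.diagonal fun i => ((|w i| : ℝ) : ℂ)).PosSemidef :=
    Matrix.posSemidef_diagonal_iff.2 fun i => Complex.zero_le_real.2 (abs_nonneg _)
  have hsq : (Matrix.diagonal fun i => ((|w i| : ℝ) : ℂ)) ^ 2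
      = (Matrix.diagonal fun i => (w i : ℂ))ᴴ * (Matrix.diagonal fun i => (w i : ℂ)) := by
    rw [pow_two, diagonal_conjTranspose, diagonal_mul_diagonal, diagonal_mul_diagonal]
    funext i
    simp [Complex.conj_ofReal, ← Complex.ofReal_mul, abs_mul_abs_self]
  have hkey := habs.eq_sqrt_of_sq_eq
    (Matrix.posSemidef_conjTranspose_mul_self (Matrix.diagonal fun i => (w i : ℂ))) hsq
  rw [traceNorm_eq_sqrt]
  rw [← hkey, trace_diagonal]
  rw [show ∑ i, ((|w i| : ℝ) : ℂ) = ((∑ i, |w i| : ℝ) : ℂ) by push_cast; ring]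
  simp

lemma psd_trace_zero {M : Matrix (Fin d) (Fin d) ℂ} (hM : M.PosSemidef)
    (h : M.trace = 0) : M = 0 := by
  set S := hM.sqrt with hS
  have hSh : Sᴴ = S := hM.posSemidef_sqrt.1.eq
  have hMS : Sᴴ * S = M := by rw [hSh]; exact hM.sqrt_mul_self
  have hdiag : ∀ i, M i i = 0 := fun i =>
    (Finset.sum_eq_zero_iff_of_nonneg
      (fun i _ => QAux.diag_entry_nonneg hM i)).1 h i (Finset.mem_univ i)
  have hScol : S = 0 := by
    ext i j
    have h1 : dotProduct (star fun k => S k j) (fun k => S k j) = 0 := by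
      have h2 : (Sᴴ * S) j j = 0 := by rw [hMS]; exact hdiag j
      simpa [Matrix.mul_apply, dotProduct, Matrix.conjTranspose_apply] using h2
    exact congrFun (dotProduct_star_self_eq_zero.1 h1) i
  rw [← hMS, hScol]
  simp

end QAux2

namespace QAux3
open QAux QAux2

variable {d : ℕ}

lemma jordan {A : Matrix (Fin d) (Fin d) ℂ} (hA : A.IsHermitian) :
    ∃ P N Q : Matrix (Fin d) (Fin d) ℂ, P.PosSemidef ∧ N.PosSemidef ∧ A = P - N ∧
      P * N = 0 ∧ N * P = 0 ∧ Q.PosSemidef ∧ (1 - Q).PosSemidef ∧ Q * A = P := by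
  classical
  set U : Matrix (Fin d) (Fin d) ℂ := (hA.eigenvectorUnitary : Matrix (Fin d) (Fin d) ℂ) with hU
  set lam := hA.eigenvalues with hlam
  have hU1 : U * star U = 1 := (Matrix.mem_unitaryGroup_iff).mp hA.eigenvectorUnitary.2
  have hU1' : star U * U = 1 := (Matrix.mem_unitaryGroup_iff').mp hA.eigenvectorUnitary.2
  set mk : (Fin d → ℝ) → Matrix (Fin d) (Fin d) ℂ :=
    fun v => U * Matrix.diagonal (fun i => (v i : ℂ)) * star U with hmk
  have hmul : ∀ v w, mk v * mk w = mk (fun i => v i * w i) := by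
    intro v w
    simp only [hmk]
    rw [Matrix.mul_assoc, Matrix.mul_assoc, ← Matrix.mul_assoc (star U),
      ← Matrix.mul_assoc (star U), hU1', Matrix.one_mul, ← Matrix.mul_assoc,
      ← Matrix.mul_assoc, Matrix.mul_assoc U, diagonal_mul_diagonal]
    push_cast
    rfl
  have hpsd : ∀ v : Fin d → ℝ, (∀ i, 0 ≤ v i) → (mk v).PosSemidef := by
    intro v hv
    have : (Matrix.diagonal fun i => (v i : ℂ)).PosSemidef :=
      Matrix.posSemidef_diagonal_iff.2 fun i => Complex.zero_le_real.2 (hv i)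
    simpa [hmk, Matrix.star_eq_conjTranspose] using this.mul_mul_conjTranspose_same U
  have hsub : ∀ v w, mk v - mk w = mk (fun i => v i - w i) := by
    intro v w
    simp only [hmk]
    rw [← Matrix.sub_mul, ← Matrix.mul_sub, Matrix.diagonal_sub]
    push_cast
    rfl
  have hmk0 : mk (fun _ => 0) = 0 := by
    simp [hmk]
  have hAmk : A = mk lam := by
    simpa [hmk, Unitary.conjStarAlgAut_apply, Function.comp_def] using hA.spectral_theorem
  have hcongr : ∀ v w : Fin d → ℝ, (∀ i, v i = w i) → mk v = mk w :=
    fun v w h => congrArg mk (funext h)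
  refine ⟨mk (fun i => max (lam i) 0), mk (fun i => max (-lam i) 0),
    mk (fun i => if 0 < lam i then 1 else 0), hpsd _ (fun i => le_max_right _ _),
    hpsd _ (fun i => le_max_right _ _), ?_, ?_, ?_, hpsd _ (fun i => by positivity), ?_, ?_⟩
  · rw [hAmk, hsub]
    refine hcongr _ _ fun i => ?_
    rcases le_total (lam i) 0 with h | h
    · rw [max_eq_right h, max_eq_left (by linarith), zero_sub, neg_neg]
    · rw [max_eq_left h, max_eq_right (by linarith), sub_zero]
  · rw [hmul, ← hmk0]
    refine hcongr _ _ fun i => ?_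
    rcases le_total (lam i) 0 with h | h
    · rw [max_eq_right h, zero_mul]
    · rw [max_eq_right (by linarith : -lam i ≤ 0), mul_zero]
  · rw [hmul, ← hmk0]
    refine hcongr _ _ fun i => ?_
    rcases le_total (lam i) 0 with h | h
    · rw [max_eq_right (by linarith : lam i ≤ 0), mul_zero]
    · rw [max_eq_right (by linarith : -lam i ≤ 0), zero_mul]
  · have h1 : (1 : Matrix (Fin d) (Fin d) ℂ) = mk (fun _ => 1) := by
      simp [hmk, Matrix.diagonal_one, hU1]
    rw [h1, hsub]
    refine hpsd _ fun i => ?_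
    split_ifs <;> norm_num
  · rw [hAmk, hmul]
    refine hcongr _ _ fun i => ?_
    split_ifs with h
    · rw [one_mul, max_eq_left h.le]
    · rw [zero_mul, max_eq_right (by linarith [not_lt.1 h])]
end QAux3

namespace QAux4
open QAux QAux2 QAux3

variable {d : ℕ}

lemma trace_mul_nonneg {X Q : Matrix (Fin d) (Fin d) ℂ} (hX : X.PosSemidef)
    (hQ : Q.PosSemidef) : 0 ≤ (Q * X).trace := by
  set S := hQ.sqrt with hS
  have hSh : Sᴴ = S := hQ.posSemidef_sqrt.1.eq
  have hQS : Q = S * S := hQ.sqrt_mul_self.symm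
  have hcyc : (Q * X).trace = (S * X * S).trace := by
    rw [hQS, Matrix.mul_assoc, Matrix.trace_mul_comm]
  rw [hcyc]
  have : (S * X * Sᴴ).PosSemidef := hX.mul_mul_conjTranspose_same S
  rw [hSh] at this
  exact trace_nonneg this

lemma traceNorm_zero : traceNorm (0 : Matrix (Fin d) (Fin d) ℂ) = 0 := by
  have h := traceNorm_diagonal_real (fun _ : Fin d => (0 : ℝ))
  simpa using h

lemma traceNorm_diff_le_two {X Y : Matrix (Fin d) (Fin d) ℂ} (hX : X.PosSemidef)
    (hY : Y.PosSemidef) (hXt : X.trace = 1) (hYt : Y.trace = 1) :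
    traceNorm (X - Y) ≤ 2 := by
  have hB : (X - Y).IsHermitian := hX.1.sub hY.1
  obtain ⟨P, N, Q, hP, hN, hBPN, hPN, hNP, hQ, h1Q, hQB⟩ := jordan hB
  have htn : traceNorm (X - Y) = P.trace.re + N.trace.re :=
    traceNorm_eq_of_decomp hP hN hBPN hPN hNP
  have htrB : (X - Y).trace = 0 := by rw [Matrix.trace_sub, hXt, hYt, sub_self]
  have htrPN : P.trace = N.trace := by
    have := htrB
    rw [hBPN, Matrix.trace_sub, sub_eq_zero] at this
    exact this
  have htrP : P.trace = (Q * X).trace - (Q * Y).trace := by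
    rw [← Matrix.trace_sub, ← Matrix.mul_sub, hQB]
  have h1 : P.trace ≤ (Q * X).trace := by
    rw [htrP]
    exact sub_le_self _ (trace_mul_nonneg hY hQ)
  have h2 : (Q * X).trace ≤ X.trace := by
    have h := trace_mul_nonneg hX h1Q
    rw [Matrix.sub_mul, Matrix.one_mul, Matrix.trace_sub] at h
    exact sub_nonneg.mp h
  have h3 : P.trace ≤ 1 := le_trans h1 (h2.trans_eq hXt)
  have h4 : P.trace.re ≤ 1 := by
    have := (Complex.le_def.1 h3).1
    simpa using this
  have h5 : N.trace.re = P.trace.re := by rw [htrPN]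
  rw [htn, h5]
  linarith

end QAux4


namespace QAux5
open QAux QAux2 QAux3 QAux4 Matrix

lemma phi_psd {d : ℕ} {Φ : Matrix (Fin d) (Fin d) ℂ →ₗ[ℂ] Matrix (Fin d) (Fin d) ℂ}
    (hΦ : IsCPTP Φ) {ρ : Matrix (Fin d) (Fin d) ℂ} (hρ : ρ.PosSemidef) :
    (Φ ρ).PosSemidef := by
  have hM : (ρ.submatrix (Prod.fst : Fin d × Fin 1 → Fin d) Prod.fst).PosSemidef :=
    hρ.submatrix _
  have hstack := hΦ.2 1 _ hM
  have key : Φ ρ = (stackMap Φ 1 (ρ.submatrix Prod.fst Prod.fst)).submatrix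
      (fun i : Fin d => (i, (0 : Fin 1))) (fun i => (i, 0)) := by
    ext i j
    have hinner : (Matrix.of fun a b =>
        (ρ.submatrix (Prod.fst : Fin d × Fin 1 → Fin d) Prod.fst) (a, (0 : Fin 1))
          (b, (0 : Fin 1))) = ρ := by
      ext a b
      simp
    simp only [Matrix.submatrix_apply, stackMap, Matrix.of_apply]
    rfl
  rw [key]
  exact hstack.submatrix _

lemma exists_density_pair {d : ℕ} (hd : 2 ≤ d) {δ : ℝ} (h0 : 0 ≤ δ) (h2 : δ ≤ 2) :
    ∃ ρ₀ ρ₁ : Matrix (Fin d) (Fin d) ℂ, IsDensity ρ₀ ∧ IsDensity ρ₁ ∧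
      traceNorm (ρ₀ - ρ₁) = δ := by
  have h01 : (0 : ℕ) < d := by omega
  have h11 : (1 : ℕ) < d := by omega
  set i0 : Fin d := ⟨0, h01⟩ with hi0
  set i1 : Fin d := ⟨1, h11⟩ with hi1
  have hne : i0 ≠ i1 := by simp [hi0, hi1, Fin.ext_iff]
  have entry : ∀ (a b : ℝ) (i : Fin d), (Pi.single i0 a + Pi.single i1 b : Fin d → ℝ) i
      = if i = i0 then a else if i = i1 then b else 0 := by
    intro a b i
    rw [Pi.add_apply, Pi.single_apply, Pi.single_apply]
    split_ifs with h h' <;> simp_all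
  have sumsingle : ∀ a b : ℝ, ∑ i, (Pi.single i0 a + Pi.single i1 b : Fin d → ℝ) i = a + b := by
    intro a b
    simp only [Pi.add_apply]
    rw [Finset.sum_add_distrib, Finset.sum_pi_single', Finset.sum_pi_single']
    simp
  have mkdens : ∀ v : Fin d → ℝ, ∀ a b : ℝ,
      v = (Pi.single i0 a + Pi.single i1 b : Fin d → ℝ) →
      0 ≤ a → 0 ≤ b → a + b = 1 →
      IsDensity (Matrix.diagonal fun i => (v i : ℂ)) := by
    rintro v a b rfl ha hb hab
    constructor
    · refine Matrix.posSemidef_diagonal_iff.2 fun i => Complex.zero_le_real.2 ?_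
      rw [entry]
      split_ifs <;> simp [ha, hb]
    · rw [Matrix.trace_diagonal]
      rw [show ∑ i, (((Pi.single i0 a + Pi.single i1 b : Fin d → ℝ) i : ℝ) : ℂ)
          = ((∑ i, (Pi.single i0 a + Pi.single i1 b : Fin d → ℝ) i : ℝ) : ℂ) by push_cast; rfl]
      rw [sumsingle, hab]
      simp
  set v0 : Fin d → ℝ := Pi.single i0 (1/2 + δ/4) + Pi.single i1 (1/2 - δ/4) with hv0
  set v1 : Fin d → ℝ := Pi.single i0 (1/2 - δ/4) + Pi.single i1 (1/2 + δ/4) with hv1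
  refine ⟨Matrix.diagonal fun i => (v0 i : ℂ), Matrix.diagonal fun i => (v1 i : ℂ),
    mkdens v0 _ _ hv0 (by linarith) (by linarith) (by ring),
    mkdens v1 _ _ hv1 (by linarith) (by linarith) (by ring), ?_⟩
  rw [Matrix.diagonal_sub]
  rw [show (fun i => ((v0 i : ℝ) : ℂ) - ((v1 i : ℝ) : ℂ))
      = fun i => (((v0 i - v1 i : ℝ)) : ℂ) by funext i; push_cast; rfl]
  rw [traceNorm_diagonal_real fun i => v0 i - v1 i]
  have habs : ∀ i : Fin d,
      |v0 i - v1 i| = (Pi.single i0 (δ/2) + Pi.single i1 (δ/2) : Fin d → ℝ) i := by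
    intro i
    rw [hv0, hv1, entry, entry, entry]
    split_ifs with h h'
    · rw [abs_of_nonneg (by linarith)]; ring
    · rw [abs_of_nonpos (by linarith)]; ring
    · simp
  calc ∑ i, |v0 i - v1 i|
      = ∑ i, (Pi.single i0 (δ/2) + Pi.single i1 (δ/2) : Fin d → ℝ) i :=
        Finset.sum_congr rfl fun i _ => habs i
    _ = δ := by rw [sumsingle]; ring

end QAux5

/-- For a quantum channel `Φ` on `M_d(ℂ)` with `d ≥ 2`, the function
`f(δ) = sup {‖Φ(ρ₀) − Φ(ρ₁)‖₁ : ‖ρ₀ − ρ₁‖₁ = δ}` is monotonically nondecreasing on `[0,2]`. -/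
theorem stmt_6 (d : ℕ) (hd : 2 ≤ d)
    (Φ : Matrix (Fin d) (Fin d) ℂ →ₗ[ℂ] Matrix (Fin d) (Fin d) ℂ) (hΦ : IsCPTP Φ)
    (f : ℝ → ℝ)
    (hf : ∀ δ, f δ = sSup {r | ∃ ρ₀ ρ₁ : Matrix (Fin d) (Fin d) ℂ, IsDensity ρ₀ ∧ IsDensity ρ₁ ∧
        traceNorm (ρ₀ - ρ₁) = δ ∧ r = traceNorm (Φ ρ₀ - Φ ρ₁)}) :
    ∀ δ δ' : ℝ, 0 ≤ δ → δ ≤ δ' → δ' ≤ 2 → f δ ≤ f δ' := by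
  intro δ δ' hδ0 hδδ' hδ'2
  classical
  have hδ'0 : 0 ≤ δ' := le_trans hδ0 hδδ'
  set S' := {r | ∃ ρ₀ ρ₁ : Matrix (Fin d) (Fin d) ℂ, IsDensity ρ₀ ∧ IsDensity ρ₁ ∧
      traceNorm (ρ₀ - ρ₁) = δ' ∧ r = traceNorm (Φ ρ₀ - Φ ρ₁)} with hS'
  have hbdd : ∀ r ∈ S', r ≤ 2 := by
    rintro r ⟨ρ₀, ρ₁, h₀, h₁, -, rfl⟩
    rw [← map_sub]
    rw [map_sub]
    exact QAux4.traceNorm_diff_le_two (QAux5.phi_psd hΦ h₀.1) (QAux5.phi_psd hΦ h₁.1)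
      ((hΦ.1 ρ₀).trans h₀.2) ((hΦ.1 ρ₁).trans h₁.2)
  have hBdd : BddAbove S' := ⟨2, hbdd⟩
  obtain ⟨ρ₀', ρ₁', h₀', h₁', hdist'⟩ := QAux5.exists_density_pair hd hδ'0 hδ'2
  have hmem0 : traceNorm (Φ ρ₀' - Φ ρ₁') ∈ S' := ⟨ρ₀', ρ₁', h₀', h₁', hdist', rfl⟩
  have hfδ'0 : 0 ≤ sSup S' :=
    le_trans (QAux2.traceNorm_nonneg _) (le_csSup hBdd hmem0)
  rw [hf δ, hf δ', ← hS']
  refine Real.sSup_le ?_ hfδ'0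
  rintro r ⟨ρ₀, ρ₁, h₀, h₁, hdist, rfl⟩
  by_cases hδz : δ = 0
  · -- at distance 0 the states coincide
    subst hδz
    have hA : (ρ₀ - ρ₁).IsHermitian := h₀.1.1.sub h₁.1.1
    obtain ⟨P, N, Q, hP, hN, hPN, hPN0, hNP0, -, -, -⟩ := QAux3.jordan hA
    have htn : traceNorm (ρ₀ - ρ₁) = P.trace.re + N.trace.re :=
      QAux2.traceNorm_eq_of_decomp hP hN hPN hPN0 hNP0
    have hPre : 0 ≤ P.trace.re := (Complex.le_def.1 (QAux.trace_nonneg hP)).1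
    have hNre : 0 ≤ N.trace.re := (Complex.le_def.1 (QAux.trace_nonneg hN)).1
    have hPim : P.trace.im = 0 := ((Complex.le_def.1 (QAux.trace_nonneg hP)).2).symm
    have hNim : N.trace.im = 0 := ((Complex.le_def.1 (QAux.trace_nonneg hN)).2).symm
    rw [hdist] at htn
    have hPre0 : P.trace.re = 0 := by linarith
    have hNre0 : N.trace.re = 0 := by linarith
    have hPzero : P = 0 := QAux2.psd_trace_zero hP
      (by rw [Complex.ext_iff]; constructor <;> simp [hPre0, hPim])
    have hNzero : N = 0 := QAux2.psd_trace_zero hN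
      (by rw [Complex.ext_iff]; constructor <;> simp [hNre0, hNim])
    have hsub : ρ₀ - ρ₁ = 0 := by rw [hPN, hPzero, hNzero, sub_zero]
    have : Φ ρ₀ - Φ ρ₁ = 0 := by rw [← map_sub, hsub, map_zero]
    rw [this, QAux4.traceNorm_zero]
    exact hfδ'0
  · have hδpos : 0 < δ := lt_of_le_of_ne hδ0 (Ne.symm hδz)
    set c : ℝ := δ' / δ with hc
    have hc1 : 1 ≤ c := (one_le_div hδpos).2 hδδ'
    have hc0 : 0 ≤ c := le_trans zero_le_one hc1
    -- Jordan decomposition of ρ₀ - ρ₁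
    have hA : (ρ₀ - ρ₁).IsHermitian := h₀.1.1.sub h₁.1.1
    obtain ⟨P, N, Q, hP, hN, hPN, hPN0, hNP0, -, -, -⟩ := QAux3.jordan hA
    have htn : traceNorm (ρ₀ - ρ₁) = P.trace.re + N.trace.re :=
      QAux2.traceNorm_eq_of_decomp hP hN hPN hPN0 hNP0
    have htr0 : (ρ₀ - ρ₁).trace = 0 := by
      rw [Matrix.trace_sub, h₀.2, h₁.2, sub_self]
    have htrPN : P.trace = N.trace := by
      have := htr0
      rw [hPN, Matrix.trace_sub, sub_eq_zero] at this
      exact this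
    have hPim : P.trace.im = 0 := ((Complex.le_def.1 (QAux.trace_nonneg hP)).2).symm
    have hPreval : P.trace.re = δ / 2 := by
      rw [hdist] at htn
      have : N.trace.re = P.trace.re := by rw [htrPN]
      linarith
    have htrP : P.trace = ((δ / 2 : ℝ) : ℂ) :=
      Complex.ext (by simpa using hPreval) (by simpa using hPim)
    have htrN : N.trace = ((δ / 2 : ℝ) : ℂ) := htrPN ▸ htrP
    -- the stretched states
    set τ := ρ₀ with hτ
    set σ₀ := ((c : ℂ) • P + ((1 - δ' / 2 : ℝ) : ℂ) • τ) with hσ₀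
    set σ₁ := ((c : ℂ) • N + ((1 - δ' / 2 : ℝ) : ℂ) • τ) with hσ₁
    have hhalf : (0 : ℝ) ≤ 1 - δ' / 2 := by linarith
    have htrc : ∀ X : Matrix (Fin d) (Fin d) ℂ, X.trace = ((δ / 2 : ℝ) : ℂ) →
        ((c : ℂ) • X + ((1 - δ' / 2 : ℝ) : ℂ) • τ).trace = 1 := by
      intro X hX
      rw [hτ] at *
      rw [Matrix.trace_add, Matrix.trace_smul, Matrix.trace_smul, hX, h₀.2,
        smul_eq_mul, smul_eq_mul, mul_one, hc]
      have hne : (δ : ℂ) ≠ 0 := by exact_mod_cast hδz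
      push_cast
      field_simp
      ring
    have hσ₀d : IsDensity σ₀ :=
      ⟨(QAux.psd_smul hP hc0).add (QAux.psd_smul h₀.1 hhalf), htrc P htrP⟩
    have hσ₁d : IsDensity σ₁ :=
      ⟨(QAux.psd_smul hN hc0).add (QAux.psd_smul h₀.1 hhalf), htrc N htrN⟩
    have hdiff : σ₀ - σ₁ = (c : ℂ) • (ρ₀ - ρ₁) := by
      rw [hσ₀, hσ₁, hPN]
      rw [smul_sub]
      abel
    have hdistσ : traceNorm (σ₀ - σ₁) = δ' := by
      rw [hdiff, QAux2.traceNorm_smul hc0, hdist, hc]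
      field_simp
    have hφdiff : Φ σ₀ - Φ σ₁ = (c : ℂ) • (Φ ρ₀ - Φ ρ₁) := by
      rw [← map_sub, hdiff, LinearMap.map_smul, map_sub]
    have hval : traceNorm (Φ σ₀ - Φ σ₁) = c * traceNorm (Φ ρ₀ - Φ ρ₁) := by
      rw [hφdiff, QAux2.traceNorm_smul hc0]
    have hmem : traceNorm (Φ σ₀ - Φ σ₁) ∈ S' := ⟨σ₀, σ₁, hσ₀d, hσ₁d, hdistσ, rfl⟩
    have hle : traceNorm (Φ ρ₀ - Φ ρ₁) ≤ traceNorm (Φ σ₀ - Φ σ₁) := by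
      rw [hval]
      nlinarith [QAux2.traceNorm_nonneg (Φ ρ₀ - Φ ρ₁)]
    exact le_trans hle (le_csSup hBdd hmem)
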